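/- Let T ≥ 1, η₀ > 0, L ≥ 0, σ ≥ 0, σ' ≥ 0, and f* ∈ ℝ. Let f_1, …, f_{T+1} be reals with f* ≤ f_t ≤ f_1 for all t ∈ {1, …, T+1}, and let g_1, …, g_T be nonnegative reals such that for every t ∈ {1, …, T}: (1/2)·g_t² ≤ (√t/η₀)·(f_t − f_{t+1}) + L²·σ'² + (η₀/√t)·L·σ². Then (1/T)·∑_{t=1}^T g_t² ≤ 2(f_1 − f*)/(η₀·√T) + 2L²σ'² + 4η₀Lσ²/√T; in particular min_{t∈{1,…,T}} g_t² is bounded by the same quantity. -/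

import Mathlib

lemma sum_inv_sqrt_le' (T : ℕ) :
    ∑ t ∈ Finset.Icc 1 T, 1 / Real.sqrt t ≤ 2 * Real.sqrt T := by
  induction T with
  | zero => simp
  | succ n ih =>
    rw [Finset.sum_Icc_succ_top (by omega)]
    have hn1 : (0:ℝ) < (n:ℝ) + 1 := by positivity
    have h2 : 0 < Real.sqrt ((n:ℝ)+1) := Real.sqrt_pos.2 hn1
    have h1 : Real.sqrt n ≤ Real.sqrt ((n:ℝ)+1) := Real.sqrt_le_sqrt (by linarith)
    have hsq : Real.sqrt ((n:ℝ)+1) ^ 2 = (n:ℝ)+1 := Real.sq_sqrt (by linarith)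
    have hsqn : Real.sqrt (n:ℝ) ^ 2 = (n:ℝ) := Real.sq_sqrt (by positivity)
    have key : 1 / Real.sqrt ((n:ℝ)+1) ≤ 2 * (Real.sqrt ((n:ℝ)+1) - Real.sqrt n) := by
      rw [div_le_iff₀ h2]
      nlinarith [sq_nonneg (Real.sqrt ((n:ℝ)+1) - Real.sqrt n)]
    push_cast
    linarith

lemma sum_sqrt_telescope' (T : ℕ) (hT : 1 ≤ T) (f : ℕ → ℝ)
    (hf : ∀ t, 1 ≤ t → t ≤ T + 1 → f t ≤ f 1) :
    ∑ t ∈ Finset.Icc 1 T, Real.sqrt t * (f t - f (t+1)) ≤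
      Real.sqrt T * (f 1 - f (T+1)) := by
  induction T, hT using Nat.le_induction with
  | base => simp
  | succ n hn ih =>
    rw [Finset.sum_Icc_succ_top (by omega)]
    have ih' := ih (fun t h1 h2 => hf t h1 (by omega))
    have h1 : Real.sqrt n ≤ Real.sqrt ((n:ℝ)+1) := Real.sqrt_le_sqrt (by linarith)
    have hfn : f (n+1) ≤ f 1 := hf (n+1) (by omega) (by omega)
    push_cast at ih' ⊢
    nlinarith [h1, hfn]

/-- Deterministic core of the non-convex convergence theorem: if values
`f t` along the trajectory lie in `[f*, f 1]`, the nonnegative quantities `g t` satisfy the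
per-step descent inequality
`(1/2) * (g t)² ≤ (√t / η₀) * (f t - f (t+1)) + L² * σ'² + (η₀ / √t) * L * σ²`
for `t = 1, …, T`, then the average of `(g t)²` is bounded by
`2 (f 1 - f*)/(η₀ √T) + 2 L² σ'² + 4 η₀ L σ² / √T`; in particular the minimum of `(g t)²`
over `t ∈ {1, …, T}` is bounded by the same quantity. -/
theorem nonconvex_rate_core (T : ℕ) (hT : 1 ≤ T)
    (η₀ L σ σ' fstar : ℝ) (hη : 0 < η₀) (hL : 0 ≤ L) (hσ : 0 ≤ σ) (hσ' : 0 ≤ σ')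
    (f : ℕ → ℝ) (g : ℕ → ℝ)
    (hf : ∀ t, 1 ≤ t → t ≤ T + 1 → fstar ≤ f t ∧ f t ≤ f 1)
    (hg : ∀ t, 1 ≤ t → t ≤ T → 0 ≤ g t)
    (hdesc : ∀ t, 1 ≤ t → t ≤ T →
      (1 / 2) * g t ^ 2 ≤ (Real.sqrt t / η₀) * (f t - f (t + 1)) +
        L ^ 2 * σ' ^ 2 + (η₀ / Real.sqrt t) * L * σ ^ 2) :
    (1 / (T : ℝ)) * ∑ t ∈ Finset.Icc 1 T, g t ^ 2 ≤
      2 * (f 1 - fstar) / (η₀ * Real.sqrt T) + 2 * L ^ 2 * σ' ^ 2 +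
        4 * η₀ * L * σ ^ 2 / Real.sqrt T ∧
    ∃ t ∈ Finset.Icc 1 T, g t ^ 2 ≤
      2 * (f 1 - fstar) / (η₀ * Real.sqrt T) + 2 * L ^ 2 * σ' ^ 2 +
        4 * η₀ * L * σ ^ 2 / Real.sqrt T := by
  have hTpos : (0:ℝ) < T := by exact_mod_cast hT
  have hsT : 0 < Real.sqrt T := Real.sqrt_pos.2 hTpos
  have hsq : Real.sqrt T * Real.sqrt T = (T:ℝ) := Real.mul_self_sqrt hTpos.le
  have hcard : ((Finset.Icc 1 T).card : ℝ) = (T:ℝ) := by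
    rw [Nat.card_Icc]; push_cast; ring
  -- sum the descent inequality
  have hstep : ∑ t ∈ Finset.Icc 1 T, (1/2) * g t ^ 2 ≤
      ∑ t ∈ Finset.Icc 1 T, ((Real.sqrt t / η₀) * (f t - f (t+1)) +
        L ^ 2 * σ' ^ 2 + (η₀ / Real.sqrt t) * L * σ ^ 2) := by
    refine Finset.sum_le_sum fun t ht => ?_
    obtain ⟨h1, h2⟩ := Finset.mem_Icc.mp ht
    exact hdesc t h1 h2
  have hsum : (1/2) * ∑ t ∈ Finset.Icc 1 T, g t ^ 2 ≤
      (1/η₀) * ∑ t ∈ Finset.Icc 1 T, Real.sqrt t * (f t - f (t+1)) +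
      (T:ℝ) * (L ^ 2 * σ' ^ 2) +
      η₀ * L * σ ^ 2 * ∑ t ∈ Finset.Icc 1 T, 1 / Real.sqrt t := by
    rw [Finset.mul_sum, Finset.mul_sum, Finset.mul_sum]
    refine hstep.trans ?_
    rw [Finset.sum_add_distrib, Finset.sum_add_distrib, Finset.sum_const, nsmul_eq_mul, hcard]
    refine le_of_eq ?_
    congr 2
    · congr 1; ext t; ring
    · ext t; ring
  have htel := sum_sqrt_telescope' T hT f (fun t h1 h2 => (hf t h1 h2).2)
  have hfstar : fstar ≤ f (T+1) := (hf (T+1) (by omega) le_rfl).1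
  have hinv := sum_inv_sqrt_le' T
  have h1 : (1/η₀) * ∑ t ∈ Finset.Icc 1 T, Real.sqrt t * (f t - f (t+1)) ≤
      (1/η₀) * (Real.sqrt T * (f 1 - fstar)) := by
    apply mul_le_mul_of_nonneg_left _ (by positivity)
    refine htel.trans ?_
    nlinarith [hsT]
  have h2 : η₀ * L * σ ^ 2 * ∑ t ∈ Finset.Icc 1 T, 1 / Real.sqrt t ≤
      η₀ * L * σ ^ 2 * (2 * Real.sqrt T) := by
    apply mul_le_mul_of_nonneg_left hinv (by positivity)
  have hbound : ∑ t ∈ Finset.Icc 1 T, g t ^ 2 ≤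
      2 * ((1/η₀) * (Real.sqrt T * (f 1 - fstar))) + 2 * ((T:ℝ) * (L ^ 2 * σ' ^ 2)) +
      2 * (η₀ * L * σ ^ 2 * (2 * Real.sqrt T)) := by linarith
  set B := 2 * (f 1 - fstar) / (η₀ * Real.sqrt T) + 2 * L ^ 2 * σ' ^ 2 +
      4 * η₀ * L * σ ^ 2 / Real.sqrt T with hB
  have hkey : B * T = 2 * ((1/η₀) * (Real.sqrt T * (f 1 - fstar))) +
      2 * ((T:ℝ) * (L ^ 2 * σ' ^ 2)) + 2 * (η₀ * L * σ ^ 2 * (2 * Real.sqrt T)) := by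
    rw [hB]
    field_simp
    linear_combination (-(2*(f 1 - fstar) + 4*L*η₀^2*σ^2)) * hsq
  have hmain : (1 / (T : ℝ)) * ∑ t ∈ Finset.Icc 1 T, g t ^ 2 ≤ B := by
    rw [one_div, inv_mul_le_iff₀ hTpos, mul_comm, hkey]
    exact hbound
  refine ⟨hmain, ?_⟩
  have hne : (Finset.Icc 1 T).Nonempty := ⟨1, Finset.mem_Icc.mpr ⟨le_rfl, hT⟩⟩
  refine Finset.exists_le_of_sum_le hne ?_
  rw [Finset.sum_const, nsmul_eq_mul, hcard, mul_comm, hkey]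
  exact hbound
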